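/- There exists a unique x̂ ∈ (ν̄, ∞] such that q(x) > 0 for all x ∈ (ν, x̂) and, in case x̂ < ∞, q(x) < 0 for all x > x̂. -/

import Mathlib

open MeasureTheory Set Filter Topology

set_option linter.unusedVariables false

/-- `h(0) := lim_{x↓0} h(x) ∈ [-∞, ∞)`; for a right-continuous increasing `h` this is the
infimum of `h` over `(0, ∞)`, viewed in the extended reals. -/
noncomputable def hZero (h : ℝ → ℝ) : EReal := ⨅ x ∈ Set.Ioi (0 : ℝ), (h x : EReal)

/-- The particular solution `R_h` to the ODE `σ²x²w'' + bxw' - rw + h = 0`. -/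
noncomputable def Rh (σ m n : ℝ) (h : ℝ → ℝ) (x : ℝ) : ℝ :=
  (1 / (σ ^ 2 * (n - m))) *
    (x ^ m * (∫ s in Set.Ioc (0 : ℝ) x, s ^ (-m - 1) * h s)
      + x ^ n * ∫ s in Set.Ioi x, s ^ (-n - 1) * h s)

/-- The function `q` of Lemma `auxiliar_2'`. -/
noncomputable def qAux' (σ m n ν L : ℝ) (h : ℝ → ℝ) (x : ℝ) : ℝ :=
  (m * x ^ (m - 1) / (σ ^ 2 * (n - m))) * (∫ s in ν..x, s ^ (-m - 1) * (h s + L))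
    - (n * x ^ (n - 1) / (σ ^ 2 * (n - m))) * ∫ s in ν..x, s ^ (-n - 1) * (h s + L)

lemma SC_rpow_cross {m n a b : ℝ} (hm : m < 0) (hn : 0 < n) (h0 : 0 < a) (hab : a < b) :
    a ^ n * b ^ m < b ^ n * a ^ m := by
  have hb : 0 < b := h0.trans hab
  have h1 : (a / b) ^ n < (a / b) ^ m :=
    Real.rpow_lt_rpow_of_exponent_gt (by positivity) (by rw [div_lt_one hb]; exact hab)
      (hm.trans hn)
  rw [Real.div_rpow h0.le hb.le, Real.div_rpow h0.le hb.le,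
    div_lt_div_iff₀ (by positivity) (by positivity)] at h1
  linarith

noncomputable def Gker (m n x t : ℝ) : ℝ := x ^ n * t ^ (-n) - x ^ m * t ^ (-m)

lemma Gker_self {m n x : ℝ} (hx : 0 < x) : Gker m n x x = 0 := by
  unfold Gker
  rw [← Real.rpow_add hx, ← Real.rpow_add hx]
  simp

lemma Gker_pos {m n x t : ℝ} (hm : m < 0) (hn : 0 < n) (ht : 0 < t) (htx : t < x) :
    0 < Gker m n x t := by
  have key := SC_rpow_cross hm hn ht htx
  have e1 : t ^ (-n) = (t ^ n)⁻¹ := Real.rpow_neg ht.le n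
  have e2 : t ^ (-m) = (t ^ m)⁻¹ := Real.rpow_neg ht.le m
  have htn : 0 < t ^ n := Real.rpow_pos_of_pos ht n
  have htm : 0 < t ^ m := Real.rpow_pos_of_pos ht m
  have h2 : x ^ m / t ^ m < x ^ n / t ^ n := by
    rw [div_lt_div_iff₀ htm htn]; linarith
  rw [Gker, e1, e2, sub_pos, ← div_eq_mul_inv, ← div_eq_mul_inv]
  exact h2

lemma Gker_nonneg {m n x t : ℝ} (hm : m < 0) (hn : 0 < n) (ht : 0 < t) (htx : t ≤ x) :
    0 ≤ Gker m n x t := by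
  rcases eq_or_lt_of_le htx with rfl | h
  · exact le_of_eq (Gker_self ht).symm
  · exact (Gker_pos hm hn ht h).le

lemma Gker_lt {m n x t₁ t₂ : ℝ} (hm : m < 0) (hn : 0 < n) (hx : 0 < x) (h0 : 0 < t₁)
    (h12 : t₁ < t₂) : Gker m n x t₂ < Gker m n x t₁ := by
  have h2 : 0 < t₂ := h0.trans h12
  have a1 : t₂ ^ (-n) < t₁ ^ (-n) := by
    rw [Real.rpow_neg h0.le, Real.rpow_neg h2.le]
    exact inv_strictAnti₀ (Real.rpow_pos_of_pos h0 n) (Real.rpow_lt_rpow h0.le h12 hn)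
  have a2 : t₁ ^ (-m) < t₂ ^ (-m) := by
    have : 0 < -m := by linarith
    exact Real.rpow_lt_rpow h0.le h12 this
  have hxn : 0 < x ^ n := Real.rpow_pos_of_pos hx n
  have hxm : 0 < x ^ m := Real.rpow_pos_of_pos hx m
  unfold Gker
  have b1 : x ^ n * t₂ ^ (-n) < x ^ n * t₁ ^ (-n) := by
    exact mul_lt_mul_of_pos_left a1 hxn
  have b2 : x ^ m * t₁ ^ (-m) < x ^ m * t₂ ^ (-m) := mul_lt_mul_of_pos_left a2 hxm
  linarith

lemma Gker_cross {m n ν t x₀ x : ℝ} (hm : m < 0) (hn : 0 < n) (hν : 0 < ν) (hνt : ν < t)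
    (hx₀ : 0 < x₀) (hx : x₀ < x) :
    Gker m n x₀ t * Gker m n x ν < Gker m n x t * Gker m n x₀ ν := by
  have ht : 0 < t := hν.trans hνt
  have identity : Gker m n x t * Gker m n x₀ ν - Gker m n x₀ t * Gker m n x ν
      = (x₀ ^ n * x ^ m - x ^ n * x₀ ^ m) * (t ^ (-n) * ν ^ (-m) - t ^ (-m) * ν ^ (-n)) := by
    unfold Gker; ring
  have f1 : x₀ ^ n * x ^ m - x ^ n * x₀ ^ m < 0 := sub_neg.mpr (SC_rpow_cross hm hn hx₀ hx)
  have f2 : t ^ (-n) * ν ^ (-m) - t ^ (-m) * ν ^ (-n) < 0 := by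
    have hinv : (t : ℝ)⁻¹ < ν⁻¹ := by
      exact inv_strictAnti₀ hν hνt
    have key := SC_rpow_cross hm hn (inv_pos.mpr ht) hinv
    have e : ∀ (s : ℝ), 0 < s → ∀ p : ℝ, s ^ (-p) = s⁻¹ ^ p := by
      intro s hs p
      rw [Real.rpow_neg hs.le, ← Real.inv_rpow hs.le]
    rw [e t ht n, e t ht m, e ν hν n, e ν hν m]
    linarith
  nlinarith [mul_pos_of_neg_of_neg f1 f2]

lemma SC_setIntegral_lt {μ : Measure ℝ} {A : Set ℝ} (hA : MeasurableSet A) (hμ : μ A ≠ 0)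
    {f g : ℝ → ℝ} (hf : IntegrableOn f A μ) (hg : IntegrableOn g A μ)
    (hlt : ∀ t ∈ A, f t < g t) : ∫ t in A, f t ∂μ < ∫ t in A, g t ∂μ := by
  have hpos : 0 < ∫ t in A, (g t - f t) ∂μ := by
    rw [setIntegral_pos_iff_support_of_nonneg_ae
      ((ae_restrict_iff' hA).2 (ae_of_all _ fun t ht => sub_nonneg.2 (hlt t ht).le))
      (hg.sub hf)]
    refine lt_of_lt_of_le (pos_iff_ne_zero.mpr hμ) (measure_mono fun t ht => ?_)
    exact ⟨fun h => absurd (sub_eq_zero.mp (by simpa using h)) (ne_of_gt (hlt t ht)), ht⟩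
  rw [integral_sub hg hf] at hpos
  linarith

lemma Gker_continuousOn {m n ν x : ℝ} (hν : 0 < ν) :
    ContinuousOn (fun t => Gker m n x t) (Icc ν x) := by
  have h1 : ∀ p : ℝ, ContinuousOn (fun t : ℝ => t ^ p) (Icc ν x) :=
    fun p => ContinuousOn.rpow_const continuousOn_id
      (fun t ht => Or.inl (ne_of_gt (lt_of_lt_of_le hν ht.1)))
  show ContinuousOn (fun t => x ^ n * t ^ (-n) - x ^ m * t ^ (-m)) (Icc ν x)
  exact (continuousOn_const.mul (h1 (-n))).sub (continuousOn_const.mul (h1 (-m)))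

lemma integrableOn_Gker (m n : ℝ) (H : StieltjesFunction ℝ) {ν : ℝ} (hν : 0 < ν) (x x' : ℝ)
    (hx' : x' ≤ x) : IntegrableOn (fun t => Gker m n x t) (Ioc ν x') H.measure := by
  rcases le_or_gt x' ν with h | h
  · rw [Set.Ioc_eq_empty (by exact fun hc => absurd h (not_le.mpr hc))]
    exact integrableOn_empty
  · exact ((Gker_continuousOn (m := m) (n := n) (x := x) hν).integrableOn_Icc).mono_set
      (fun t ht => ⟨ht.1.le, ht.2.trans hx'⟩)

noncomputable def Qfun (m n ν L : ℝ) (H : StieltjesFunction ℝ) (x : ℝ) : ℝ :=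
  (-(H ν + L)) * Gker m n x ν - ∫ t in Ioc ν x, Gker m n x t ∂H.measure

lemma Q_pos {m n ν L : ℝ} (H : StieltjesFunction ℝ) (hm : m < 0) (hn : 0 < n) (hν : 0 < ν)
    (hHL : H ν + L < 0) {x : ℝ} (hx : ν < x)
    (hng : ∀ t, ν < t → t < x → H t + L ≤ 0) : 0 < Qfun m n ν L H x := by
  have hx0 : 0 < x := hν.trans hx
  have hGν : 0 < Gker m n x ν := Gker_pos hm hn hν hx
  have hc : 0 < -(H ν + L) := by linarith
  have hsplit : ∫ t in Ioc ν x, Gker m n x t ∂H.measure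
      = ∫ t in Ioo ν x, Gker m n x t ∂H.measure := by
    rw [← Set.Ioo_union_right hx,
      MeasureTheory.setIntegral_union (by simp) (measurableSet_singleton x)
        ((integrableOn_Gker m n H hν x x le_rfl).mono_set Ioo_subset_Ioc_self)
        ((integrableOn_singleton_iff).mpr (Or.inl (by simp [Gker_self hx0]))),
      integral_singleton, Gker_self hx0, smul_zero, add_zero]
  rcases eq_or_ne (H.measure (Ioo ν x)) 0 with h0 | h0
  · rw [Qfun, hsplit, Measure.restrict_eq_zero.mpr h0, integral_zero_measure]
    simpa using mul_pos hc hGν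
  · have hint : IntegrableOn (fun t => Gker m n x t) (Ioo ν x) H.measure :=
      (integrableOn_Gker m n H hν x x le_rfl).mono_set Ioo_subset_Ioc_self
    have hfin : H.measure (Ioo ν x) < ⊤ := by
      rw [H.measure_Ioo]; exact ENNReal.ofReal_lt_top
    have hlt : ∫ t in Ioo ν x, Gker m n x t ∂H.measure
        < ∫ t in Ioo ν x, Gker m n x ν ∂H.measure :=
      SC_setIntegral_lt measurableSet_Ioo h0 hint
        (integrableOn_const hfin.ne)
        (fun t ht => Gker_lt hm hn hx0 hν ht.1)
    have hconst : ∫ t in Ioo ν x, Gker m n x ν ∂H.measure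
        = (Function.leftLim H x - H ν) * Gker m n x ν := by
      rw [setIntegral_const, measureReal_def, H.measure_Ioo, smul_eq_mul,
        ENNReal.toReal_ofReal (by linarith [H.mono.le_leftLim hx])]
    have hll : Function.leftLim H x + L ≤ 0 := by
      have htd := H.mono.tendsto_leftLim x
      have hev : ∀ᶠ t in 𝓝[<] x, H t ≤ -L := by
        filter_upwards [Ioo_mem_nhdsLT_of_mem (⟨hx, le_refl x⟩ : x ∈ Ioc ν x)] with t ht
        linarith [hng t ht.1 ht.2]
      linarith [le_of_tendsto htd hev]
    have hmono : H ν ≤ Function.leftLim H x := H.mono.le_leftLim hx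
    rw [Qfun, hsplit]
    nlinarith [hlt, hconst]

lemma Q_neg {m n ν L : ℝ} (H : StieltjesFunction ℝ) (hm : m < 0) (hn : 0 < n) (hν : 0 < ν)
    (hHL : H ν + L < 0) {x₀ x : ℝ} (h0 : ν < x₀) (hx : x₀ < x)
    (hQ : Qfun m n ν L H x₀ ≤ 0) : Qfun m n ν L H x < 0 := by
  have hx0 : 0 < x₀ := hν.trans h0
  have hxx : 0 < x := hx0.trans hx
  have hGν0 : 0 < Gker m n x₀ ν := Gker_pos hm hn hν h0
  have hGν : 0 < Gker m n x ν := Gker_pos hm hn hν (h0.trans hx)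
  set c : ℝ := -(H ν + L) with hc_def
  have hc : 0 < c := by simp only [hc_def]; linarith
  set κ : ℝ := Gker m n x ν / Gker m n x₀ ν with hκ_def
  have hκ : 0 < κ := div_pos hGν hGν0
  have hI0 : c * Gker m n x₀ ν ≤ ∫ t in Ioc ν x₀, Gker m n x₀ t ∂H.measure := by
    simp only [Qfun] at hQ; rw [hc_def]; linarith
  have hpos : (0:ℝ) < ∫ t in Ioc ν x₀, Gker m n x₀ t ∂H.measure :=
    lt_of_lt_of_le (mul_pos hc hGν0) hI0
  have hμ0 : H.measure (Ioc ν x₀) ≠ 0 := by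
    intro hz
    rw [Measure.restrict_eq_zero.mpr hz, integral_zero_measure] at hpos
    exact lt_irrefl 0 hpos
  have hstrict : ∫ t in Ioc ν x₀, κ * Gker m n x₀ t ∂H.measure
      < ∫ t in Ioc ν x₀, Gker m n x t ∂H.measure := by
    refine SC_setIntegral_lt measurableSet_Ioc hμ0
      ((integrableOn_Gker m n H hν x₀ x₀ le_rfl).const_mul κ)
      (integrableOn_Gker m n H hν x x₀ hx.le) (fun t ht => ?_)
    have hcross := Gker_cross hm hn hν ht.1 hx0 hx
    rw [hκ_def, div_mul_eq_mul_div, div_lt_iff₀ hGν0]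
    linarith
  have heval : ∫ t in Ioc ν x₀, κ * Gker m n x₀ t ∂H.measure
      = κ * ∫ t in Ioc ν x₀, Gker m n x₀ t ∂H.measure := integral_const_mul κ _
  have hκI : c * Gker m n x ν ≤ κ * ∫ t in Ioc ν x₀, Gker m n x₀ t ∂H.measure := by
    have h2 : κ * (c * Gker m n x₀ ν) ≤ κ * ∫ t in Ioc ν x₀, Gker m n x₀ t ∂H.measure :=
      mul_le_mul_of_nonneg_left hI0 hκ.le
    have h3 : κ * (c * Gker m n x₀ ν) = c * Gker m n x ν := by
      rw [hκ_def]; field_simp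
    linarith
  have hsplit : ∫ t in Ioc ν x, Gker m n x t ∂H.measure
      = (∫ t in Ioc ν x₀, Gker m n x t ∂H.measure)
        + ∫ t in Ioc x₀ x, Gker m n x t ∂H.measure := by
    rw [← Set.Ioc_union_Ioc_eq_Ioc h0.le hx.le,
      MeasureTheory.setIntegral_union (Set.Ioc_disjoint_Ioc_of_le le_rfl) measurableSet_Ioc
        (integrableOn_Gker m n H hν x x₀ hx.le)
        ((integrableOn_Gker m n H hν x x le_rfl).mono_set
          (fun t ht => ⟨h0.trans ht.1, ht.2⟩))]
  have htail : 0 ≤ ∫ t in Ioc x₀ x, Gker m n x t ∂H.measure :=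
    setIntegral_nonneg measurableSet_Ioc
      (fun t ht => Gker_nonneg hm hn (hx0.trans ht.1) ht.2)
  simp only [Qfun]
  rw [← hc_def, hsplit]
  linarith

lemma SC_rpow_bound {c a b : ℝ} (ha : 0 < a) {s : ℝ} (hs : s ∈ Ioc a b) :
    |s ^ c| ≤ max (a ^ c) (b ^ c) := by
  have hs0 : 0 < s := ha.trans hs.1
  rw [abs_of_nonneg (Real.rpow_nonneg hs0.le c)]
  rcases le_or_gt 0 c with hc | hc
  · exact le_max_of_le_right (Real.rpow_le_rpow hs0.le hs.2 hc)
  · exact le_max_of_le_left (Real.rpow_le_rpow_of_nonpos ha hs.1.le hc.le)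

lemma SC_integrableOn_of_bound {μ : Measure ℝ} {A : Set ℝ} (hA : MeasurableSet A)
    (hfin : μ A ≠ ⊤) {f : ℝ → ℝ} (hmeas : AEStronglyMeasurable f (μ.restrict A)) (C : ℝ)
    (hC : ∀ s ∈ A, |f s| ≤ C) : IntegrableOn f A μ := by
  haveI : IsFiniteMeasure (μ.restrict A) :=
    ⟨by rwa [Measure.restrict_apply_univ, lt_top_iff_ne_top]⟩
  exact Integrable.mono' (integrable_const C) hmeas
    ((ae_restrict_iff' hA).2 (ae_of_all _ fun s hs => by
      simpa [Real.norm_eq_abs] using hC s hs))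

lemma SC_rpow_integral {p : ℝ} (hp : p ≠ 0) {a b : ℝ} (ha : 0 < a) (hab : a ≤ b) :
    ∫ s in Ioc a b, s ^ (-p - 1) = (b ^ (-p) - a ^ (-p)) / (-p) := by
  rw [← intervalIntegral.integral_of_le hab,
    integral_rpow (Or.inr ⟨by intro h; apply hp; linarith, by
      intro h0
      rw [Set.mem_uIcc] at h0
      rcases h0 with ⟨h1, _⟩ | ⟨_, h2⟩ <;> linarith⟩)]
  have h1 : -p - 1 + 1 = -p := by ring
  rw [h1]

lemma SC_fubini {p : ℝ} (hp : p ≠ 0) {ν x : ℝ} (hν : 0 < ν) (hx : ν < x)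
    (L : ℝ) (H : StieltjesFunction ℝ) :
    ∫ s in Ioc ν x, s ^ (-p - 1) * (H s + L)
      = (H ν + L) * ((x ^ (-p) - ν ^ (-p)) / (-p))
        + ∫ t in Ioc ν x, (x ^ (-p) - t ^ (-p)) / (-p) ∂H.measure := by
  set μ := H.measure with hμdef
  have hx0 : 0 < x := hν.trans hx
  have hfinμ : μ (Ioc ν x) ≠ ⊤ := by rw [hμdef, H.measure_Ioc]; exact ENNReal.ofReal_ne_top
  have hfinv : (volume : Measure ℝ) (Ioc ν x) ≠ ⊤ := by
    rw [Real.volume_Ioc]; exact ENNReal.ofReal_ne_top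
  have hcont : ContinuousOn (fun s : ℝ => s ^ (-p - 1)) (Ioc ν x) :=
    ContinuousOn.rpow_const continuousOn_id
      (fun t ht => Or.inl (ne_of_gt (hν.trans ht.1)))
  have hmeas1 : AEStronglyMeasurable (fun s : ℝ => s ^ (-p - 1))
      (volume.restrict (Ioc ν x)) := hcont.aestronglyMeasurable measurableSet_Ioc
  set B1 : ℝ := max (ν ^ (-p - 1)) (x ^ (-p - 1)) with hB1def
  set B2 : ℝ := |H ν + L| + |H x + L| with hB2def
  have hB1 : ∀ s ∈ Ioc ν x, |s ^ (-p - 1)| ≤ B1 := fun s hs => SC_rpow_bound hν hs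
  have hB1pos : (0:ℝ) ≤ B1 := le_max_of_le_left (Real.rpow_nonneg hν.le _)
  have hB2 : ∀ s ∈ Ioc ν x, |H s + L| ≤ B2 := by
    intro s hs
    have h1 := H.mono hs.1.le
    have h2 := H.mono hs.2
    rw [hB2def]
    rw [abs_le]
    constructor
    · have := neg_abs_le (H ν + L)
      have := abs_nonneg (H x + L)
      linarith
    · have := le_abs_self (H x + L)
      have := abs_nonneg (H ν + L)
      linarith
  -- integrability of the two pieces
  have hint1 : IntegrableOn (fun s : ℝ => s ^ (-p - 1) * (H ν + L)) (Ioc ν x) volume := by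
    refine SC_integrableOn_of_bound measurableSet_Ioc hfinv
      (hmeas1.mul aestronglyMeasurable_const) (B1 * |H ν + L|) (fun s hs => ?_)
    rw [abs_mul]
    exact mul_le_mul (hB1 s hs) le_rfl (abs_nonneg _)
      hB1pos
  have hmeasH : AEStronglyMeasurable (fun s : ℝ => H s - H ν) (volume.restrict (Ioc ν x)) :=
    ((H.mono.measurable.aestronglyMeasurable).sub aestronglyMeasurable_const)
  have hint2 : IntegrableOn (fun s : ℝ => s ^ (-p - 1) * (H s - H ν)) (Ioc ν x) volume := by
    refine SC_integrableOn_of_bound measurableSet_Ioc hfinv (hmeas1.mul hmeasH)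
      (B1 * (B2 + B2)) (fun s hs => ?_)
    rw [abs_mul]
    refine mul_le_mul (hB1 s hs) ?_ (abs_nonneg _)
      hB1pos
    have e : H s - H ν = (H s + L) - (H ν + L) := by ring
    rw [e]
    calc |(H s + L) - (H ν + L)| ≤ |H s + L| + |H ν + L| := abs_sub _ _
      _ ≤ B2 + B2 := by
          refine add_le_add (hB2 s hs) ?_
          rw [hB2def]
          have := abs_nonneg (H x + L)
          linarith
  -- split
  have hsplitfun : EqOn (fun s : ℝ => s ^ (-p - 1) * (H s + L))
      (fun s : ℝ => s ^ (-p - 1) * (H ν + L) + s ^ (-p - 1) * (H s - H ν)) (Ioc ν x) := by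
    intro s _; simp only; ring
  rw [setIntegral_congr_fun measurableSet_Ioc hsplitfun, integral_add hint1 hint2]
  have hfirst : ∫ s in Ioc ν x, s ^ (-p - 1) * (H ν + L)
      = (H ν + L) * ((x ^ (-p) - ν ^ (-p)) / (-p)) := by
    rw [integral_mul_const, SC_rpow_integral hp hν hx.le]
    ring
  rw [hfirst]
  congr 1
  -- now the Fubini part
  set F : ℝ → ℝ → ℝ := fun s t => Set.indicator (Iic s) (fun _ => s ^ (-p - 1)) t with hFdef
  have hF2 : ∀ s t : ℝ, F s t = Set.indicator (Ici t) (fun u : ℝ => u ^ (-p - 1)) s := by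
    intro s t
    simp only [hFdef, Set.indicator_apply, Set.mem_Iic, Set.mem_Ici]
  have hclaim2 : EqOn (fun s : ℝ => s ^ (-p - 1) * (H s - H ν))
      (fun s : ℝ => ∫ t in Ioc ν x, F s t ∂μ) (Ioc ν x) := by
    intro s hs
    simp only [hFdef]
    rw [setIntegral_indicator measurableSet_Iic, Set.Ioc_inter_Iic,
      min_eq_right hs.2, setIntegral_const, measureReal_def, hμdef, H.measure_Ioc,
      ENNReal.toReal_ofReal (sub_nonneg.2 (H.mono hs.1.le)), smul_eq_mul]
    ring
  rw [setIntegral_congr_fun measurableSet_Ioc hclaim2]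
  -- product integrability
  haveI hfin1 : IsFiniteMeasure (volume.restrict (Ioc ν x)) :=
    ⟨by rwa [Measure.restrict_apply_univ, lt_top_iff_ne_top]⟩
  haveI hfin2 : IsFiniteMeasure (μ.restrict (Ioc ν x)) :=
    ⟨by rwa [Measure.restrict_apply_univ, lt_top_iff_ne_top]⟩
  have hFuncurry : Function.uncurry F
      = Set.indicator {z : ℝ × ℝ | z.2 ≤ z.1} (fun z : ℝ × ℝ => z.1 ^ (-p - 1)) := by
    funext z
    simp only [Function.uncurry, hFdef, Set.indicator_apply, Set.mem_Iic, Set.mem_setOf_eq]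
  have hFmeas : AEStronglyMeasurable (Function.uncurry F)
      ((volume.restrict (Ioc ν x)).prod (μ.restrict (Ioc ν x))) := by
    rw [hFuncurry, Measure.prod_restrict]
    refine AEStronglyMeasurable.indicator ?_ (measurableSet_le measurable_snd measurable_fst)
    refine ContinuousOn.aestronglyMeasurable ?_ (measurableSet_Ioc.prod measurableSet_Ioc)
    exact ContinuousOn.rpow_const continuous_fst.continuousOn
      (fun z hz => Or.inl (ne_of_gt (hν.trans hz.1.1)))
  have hFint : Integrable (Function.uncurry F)
      ((volume.restrict (Ioc ν x)).prod (μ.restrict (Ioc ν x))) := by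
    refine Integrable.mono' (integrable_const B1) hFmeas ?_
    rw [Measure.prod_restrict]
    filter_upwards [ae_restrict_mem (measurableSet_Ioc.prod measurableSet_Ioc)] with z hz
    rw [hFuncurry, Real.norm_eq_abs, Set.indicator_apply]
    split_ifs
    · exact SC_rpow_bound hν hz.1
    · simpa using hB1pos
  have hswap := MeasureTheory.integral_integral_swap hFint
  rw [hswap]
  refine setIntegral_congr_fun measurableSet_Ioc (fun t ht => ?_)
  have hFt : (fun s : ℝ => F s t) = Set.indicator (Ici t) (fun u : ℝ => u ^ (-p - 1)) := by
    funext s; exact hF2 s t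
  rw [hFt, setIntegral_indicator measurableSet_Ici]
  have hset : Ioc ν x ∩ Ici t = Icc t x := by
    ext s
    simp only [Set.mem_inter_iff, Set.mem_Ioc, Set.mem_Ici, Set.mem_Icc]
    constructor
    · rintro ⟨⟨_, h2⟩, h3⟩; exact ⟨h3, h2⟩
    · rintro ⟨h1, h2⟩; exact ⟨⟨ht.1.trans_le h1, h2⟩, h1⟩
  rw [hset, integral_Icc_eq_integral_Ioc, SC_rpow_integral hp (hν.trans ht.1) ht.2]

lemma SC_scale {p x t : ℝ} (hp : p ≠ 0) (hx : 0 < x) :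
    x * p * x ^ (p - 1) * ((x ^ (-p) - t ^ (-p)) / (-p)) = x ^ p * t ^ (-p) - 1 := by
  have e1 : x * x ^ (p - 1) = x ^ p := by
    nth_rewrite 1 [← Real.rpow_one x]
    rw [← Real.rpow_add hx]; norm_num
  have e2 : x ^ p * x ^ (-p) = 1 := by
    rw [← Real.rpow_add hx]; norm_num
  have e3 : p / (-p) = -1 := by field_simp
  calc x * p * x ^ (p - 1) * ((x ^ (-p) - t ^ (-p)) / (-p))
      = (x * x ^ (p - 1)) * ((p / (-p)) * (x ^ (-p) - t ^ (-p))) := by ring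
    _ = x ^ p * (-1 * (x ^ (-p) - t ^ (-p))) := by rw [e1, e3]
    _ = -(x ^ p * x ^ (-p)) + x ^ p * t ^ (-p) := by ring
    _ = x ^ p * t ^ (-p) - 1 := by rw [e2]; ring

lemma SC_Gker_comb {m n x t : ℝ} (hm : m < 0) (hn : 0 < n) (hx : 0 < x) :
    Gker m n x t = x * n * x ^ (n - 1) * ((x ^ (-n) - t ^ (-n)) / (-n))
      - x * m * x ^ (m - 1) * ((x ^ (-m) - t ^ (-m)) / (-m)) := by
  have hA := SC_scale (p := n) (t := t) (ne_of_gt hn) hx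
  have hB := SC_scale (p := m) (t := t) (ne_of_lt hm) hx
  unfold Gker; linarith

lemma SC_integrableOn_rp (p : ℝ) (H : StieltjesFunction ℝ) {ν x : ℝ} (hν : 0 < ν) :
    IntegrableOn (fun t : ℝ => (x ^ (-p) - t ^ (-p)) / (-p)) (Ioc ν x) H.measure := by
  rcases le_or_gt x ν with hle | hlt
  · rw [Set.Ioc_eq_empty (fun hc => absurd hle (not_le.mpr hc))]
    exact integrableOn_empty
  · refine (ContinuousOn.integrableOn_Icc ?_).mono_set Ioc_subset_Icc_self
    refine ContinuousOn.div_const ?_ _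
    exact continuousOn_const.sub (ContinuousOn.rpow_const continuousOn_id
      (fun t ht => Or.inl (ne_of_gt (lt_of_lt_of_le hν ht.1))))

lemma Q_rep {σ m n ν L : ℝ} (hσ : σ ≠ 0) (hm : m < 0) (hn : 0 < n) (hν : 0 < ν)
    (H : StieltjesFunction ℝ) (h : ℝ → ℝ) (hhH : ∀ s, ν ≤ s → h s = H s)
    {x : ℝ} (hx : ν < x) :
    σ ^ 2 * (n - m) * x * qAux' σ m n ν L h x = Qfun m n ν L H x := by
  have hx0 : 0 < x := hν.trans hx
  have hm0 : m ≠ 0 := ne_of_lt hm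
  have hn0 : n ≠ 0 := ne_of_gt hn
  have hD : σ ^ 2 * (n - m) ≠ 0 := by
    have h1 : 0 < σ ^ 2 := by positivity
    have h2 : 0 < n - m := by linarith
    positivity
  have hIm : ∫ s in ν..x, s ^ (-m - 1) * (h s + L)
      = ∫ s in Ioc ν x, s ^ (-m - 1) * (H s + L) := by
    rw [intervalIntegral.integral_of_le hx.le]
    exact setIntegral_congr_fun measurableSet_Ioc (fun s hs => by rw [hhH s hs.1.le])
  have hIn : ∫ s in ν..x, s ^ (-n - 1) * (h s + L)
      = ∫ s in Ioc ν x, s ^ (-n - 1) * (H s + L) := by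
    rw [intervalIntegral.integral_of_le hx.le]
    exact setIntegral_congr_fun measurableSet_Ioc (fun s hs => by rw [hhH s hs.1.le])
  rw [qAux', hIm, hIn, SC_fubini hm0 hν hx L H, SC_fubini hn0 hν hx L H]
  set Jm := ∫ t in Ioc ν x, (x ^ (-m) - t ^ (-m)) / (-m) ∂H.measure with hJm
  set Jn := ∫ t in Ioc ν x, (x ^ (-n) - t ^ (-n)) / (-n) ∂H.measure with hJn
  have hGI : ∫ t in Ioc ν x, Gker m n x t ∂H.measure
      = x * n * x ^ (n - 1) * Jn - x * m * x ^ (m - 1) * Jm := by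
    have hcong : EqOn (fun t : ℝ => Gker m n x t)
        (fun t : ℝ => x * n * x ^ (n - 1) * ((x ^ (-n) - t ^ (-n)) / (-n))
          - x * m * x ^ (m - 1) * ((x ^ (-m) - t ^ (-m)) / (-m))) (Ioc ν x) :=
      fun t _ => SC_Gker_comb hm hn hx0
    rw [setIntegral_congr_fun measurableSet_Ioc hcong,
      integral_sub ((SC_integrableOn_rp n H hν).const_mul _)
        ((SC_integrableOn_rp m H hν).const_mul _),
      integral_const_mul, integral_const_mul, hJm, hJn]
  have hGν : Gker m n x ν = x * n * x ^ (n - 1) * ((x ^ (-n) - ν ^ (-n)) / (-n))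
      - x * m * x ^ (m - 1) * ((x ^ (-m) - ν ^ (-m)) / (-m)) := SC_Gker_comb hm hn hx0
  rw [Qfun, hGI, hGν]
  have hnm : n - m ≠ 0 := by intro h; linarith
  field_simp
  ring

lemma SC_rpow_bound' {c a b s : ℝ} (ha : 0 < a) (h1 : a ≤ s) (h2 : s ≤ b) :
    |s ^ c| ≤ max (a ^ c) (b ^ c) := by
  have hs0 : 0 < s := ha.trans_le h1
  rw [abs_of_nonneg (Real.rpow_nonneg hs0.le c)]
  rcases le_or_gt 0 c with hc | hc
  · exact le_max_of_le_right (Real.rpow_le_rpow hs0.le h2 hc)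
  · exact le_max_of_le_left (Real.rpow_le_rpow_of_nonpos ha h1 hc.le)

lemma SC_integrableOn_main (p L : ℝ) (H : StieltjesFunction ℝ) {ν b : ℝ} (hν : 0 < ν) :
    IntegrableOn (fun s : ℝ => s ^ (-p - 1) * (H s + L)) (Icc ν b) volume := by
  rcases le_or_gt ν b with hb | hb
  swap
  · rw [Set.Icc_eq_empty (not_le.mpr hb)]; exact integrableOn_empty
  have hmeas : AEStronglyMeasurable (fun s : ℝ => s ^ (-p - 1) * (H s + L))
      (volume.restrict (Icc ν b)) := by
    refine AEStronglyMeasurable.mul ?_ ?_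
    · exact (ContinuousOn.rpow_const continuousOn_id
        (fun t ht => Or.inl (ne_of_gt (hν.trans_le ht.1)))).aestronglyMeasurable
        measurableSet_Icc
    · exact (H.mono.measurable.aestronglyMeasurable).add aestronglyMeasurable_const
  refine SC_integrableOn_of_bound measurableSet_Icc (by
      rw [Real.volume_Icc]; exact ENNReal.ofReal_ne_top) hmeas
    (max (ν ^ (-p - 1)) (b ^ (-p - 1)) * (|H ν + L| + |H b + L|)) (fun s hs => ?_)
  rw [abs_mul]
  refine mul_le_mul (SC_rpow_bound' hν hs.1 hs.2) ?_ (abs_nonneg _)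
    (le_max_of_le_left (Real.rpow_nonneg hν.le _))
  have h1 := H.mono hs.1
  have h2 := H.mono hs.2
  rw [abs_le]
  constructor
  · have := neg_abs_le (H ν + L); have := abs_nonneg (H b + L); linarith
  · have := le_abs_self (H b + L); have := abs_nonneg (H ν + L); linarith

noncomputable def gSC (ν p L : ℝ) (H : StieltjesFunction ℝ) (s : ℝ) : ℝ :=
  Set.indicator (Ici ν) (fun u : ℝ => u ^ (-p - 1) * (H u + L)) s

lemma gSC_intervalIntegrable (ν p L : ℝ) (H : StieltjesFunction ℝ) (hν : 0 < ν) (a b : ℝ) :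
    IntervalIntegrable (gSC ν p L H) volume a b := by
  rw [intervalIntegrable_iff]
  have he : gSC ν p L H = Set.indicator (Ici ν) (fun u : ℝ => u ^ (-p - 1) * (H u + L)) :=
    rfl
  rw [he]
  have : IntegrableOn (Set.indicator (Ici ν) (fun u : ℝ => u ^ (-p - 1) * (H u + L)))
      (Set.uIoc a b) volume
      ↔ Integrable (Set.indicator (Ici ν) (fun u : ℝ => u ^ (-p - 1) * (H u + L)))
        (volume.restrict (Set.uIoc a b)) := Iff.rfl
  rw [this, integrable_indicator_iff measurableSet_Ici, IntegrableOn,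
    Measure.restrict_restrict measurableSet_Ici]
  refine (SC_integrableOn_main p L H (b := max a b) hν).mono_set (fun s hs => ?_)
  rcases hs with ⟨hs1, hs2⟩
  rw [Set.mem_Icc]
  exact ⟨hs1, hs2.2⟩

lemma qAux'_continuousAt {σ m n ν L : ℝ} (hσ : σ ≠ 0) (hm : m < 0) (hn : 0 < n) (hν : 0 < ν)
    (H : StieltjesFunction ℝ) (h : ℝ → ℝ) (hhH : ∀ s, ν ≤ s → h s = H s)
    {x₀ : ℝ} (hx₀ : ν < x₀) : ContinuousAt (qAux' σ m n ν L h) x₀ := by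
  have hx₀0 : 0 < x₀ := hν.trans hx₀
  have hgcont : ∀ p, Continuous (fun y => ∫ s in ν..y, gSC ν p L H s) :=
    fun p => intervalIntegral.continuous_primitive (gSC_intervalIntegrable ν p L H hν) ν
  set φ : ℝ → ℝ := fun y =>
    (m * y ^ (m - 1) / (σ ^ 2 * (n - m))) * (∫ s in ν..y, gSC ν m L H s)
      - (n * y ^ (n - 1) / (σ ^ 2 * (n - m))) * ∫ s in ν..y, gSC ν n L H s with hφdef
  have hφcont : ContinuousAt φ x₀ := by
    have hc1 : ContinuousAt (fun y : ℝ => y ^ (m - 1)) x₀ :=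
      Real.continuousAt_rpow_const x₀ (m - 1) (Or.inl (ne_of_gt hx₀0))
    have hc2 : ContinuousAt (fun y : ℝ => y ^ (n - 1)) x₀ :=
      Real.continuousAt_rpow_const x₀ (n - 1) (Or.inl (ne_of_gt hx₀0))
    exact (((hc1.const_mul m).div_const _).mul ((hgcont m).continuousAt)).sub
      (((hc2.const_mul n).div_const _).mul ((hgcont n).continuousAt))
  have hev : φ =ᶠ[𝓝 x₀] qAux' σ m n ν L h := by
    filter_upwards [Ioi_mem_nhds hx₀] with y hy
    have hint : ∀ p : ℝ, ∫ s in ν..y, gSC ν p L H s = ∫ s in ν..y, s ^ (-p - 1) * (h s + L) := by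
      intro p
      refine intervalIntegral.integral_congr (fun s hs => ?_)
      rw [Set.uIcc_of_le (le_of_lt hy)] at hs
      rw [gSC]
      simp only [Set.indicator_of_mem (Set.mem_Ici.mpr hs.1), hhH s hs.1]
    simp only [hφdef, qAux']
    rw [hint m, hint n]
  exact hφcont.congr hev

theorem statement_3
    (r b σ m n : ℝ) (h : ℝ → ℝ)
    (hr : 0 < r) (hσ : σ ≠ 0) (hm : m < 0) (hn : 0 < n)
    (hmRoot : σ ^ 2 * m ^ 2 + (b - σ ^ 2) * m - r = 0)
    (hnRoot : σ ^ 2 * n ^ 2 + (b - σ ^ 2) * n - r = 0)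
    (hMono : MonotoneOn h (Set.Ioi 0))
    (hRC : ∀ x : ℝ, 0 < x → ContinuousWithinAt h (Set.Ici x) x)
    (hTop : Tendsto h atTop atTop)
    (hIntZero : ∀ x : ℝ, 0 < x →
      IntegrableOn (fun s : ℝ => s ^ (-m - 1) * h s) (Set.Ioc 0 x))
    (hIntTop : ∀ x : ℝ, 0 < x →
      IntegrableOn (fun s : ℝ => s ^ (-n - 1) * h s) (Set.Ioi x))
    (ν L : ℝ) (hν : 0 < ν)
    (hνL : h ν + L < 0) :
    ∃! xhat : EReal,
      ((sInf {x : ℝ | 0 < x ∧ 0 < h x + L} : ℝ) < xhat) ∧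
      (∀ x : ℝ, ν < x → (x : EReal) < xhat → 0 < qAux' σ m n ν L h x) ∧
      (∀ x : ℝ, xhat < (x : EReal) → qAux' σ m n ν L h x < 0) := by
  -- the Stieltjes extension of h
  have hmax : ∀ y : ℝ, 0 < max y ν := fun y => lt_of_lt_of_le hν (le_max_right y ν)
  have hbmono : Monotone (fun y : ℝ => h (max y ν)) := by
    intro a c hac
    exact hMono (hmax a) (hmax c) (max_le_max hac le_rfl)
  have hbrc : ∀ y : ℝ, ContinuousWithinAt (fun y : ℝ => h (max y ν)) (Ici y) y := by
    intro y
    have hc : ContinuousWithinAt (fun y : ℝ => max y ν) (Ici y) y :=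
      (continuous_id.max continuous_const).continuousWithinAt
    refine ContinuousWithinAt.comp (hRC (max y ν) (hmax y)) hc (fun z hz => ?_)
    exact Set.mem_Ici.mpr (max_le_max (Set.mem_Ici.mp hz) le_rfl)
  set H : StieltjesFunction ℝ := ⟨fun y => h (max y ν), hbmono, hbrc⟩ with hHdef
  have hhH : ∀ s, ν ≤ s → h s = H s := by
    intro s hs
    show h s = h (max s ν)
    rw [max_eq_left hs]
  have hHL : H ν + L < 0 := by rw [← hhH ν le_rfl]; exact hνL
  -- positivity transfers
  have hKpos : ∀ x : ℝ, ν < x → 0 < σ ^ 2 * (n - m) * x := by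
    intro x hx
    have h1 : 0 < σ ^ 2 := by positivity
    have h2 : 0 < n - m := by linarith
    have h3 : 0 < x := hν.trans hx
    positivity
  have hq_eq : ∀ x : ℝ, ν < x →
      qAux' σ m n ν L h x = Qfun m n ν L H x / (σ ^ 2 * (n - m) * x) := by
    intro x hx
    rw [eq_div_iff (ne_of_gt (hKpos x hx)), ← Q_rep hσ hm hn hν H h hhH hx]
    ring
  have hq_of_Q : ∀ x : ℝ, ν < x → 0 < Qfun m n ν L H x → 0 < qAux' σ m n ν L h x := by
    intro x hx hQ
    rw [hq_eq x hx]
    exact div_pos hQ (hKpos x hx)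
  have hqneg_of_Q : ∀ x : ℝ, ν < x → Qfun m n ν L H x < 0 → qAux' σ m n ν L h x < 0 := by
    intro x hx hQ
    rw [hq_eq x hx]
    exact div_neg_of_neg_of_pos hQ (hKpos x hx)
  have hQ_of_q : ∀ x : ℝ, ν < x → 0 < qAux' σ m n ν L h x → 0 < Qfun m n ν L H x := by
    intro x hx hq
    rw [← Q_rep hσ hm hn hν H h hhH hx]
    exact mul_pos (hKpos x hx) hq
  -- the set S and its infimum
  set S : Set ℝ := {x : ℝ | 0 < x ∧ 0 < h x + L} with hSdef
  set νb : ℝ := sInf S with hνbdef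
  have hSne : S.Nonempty := by
    have h1 : ∀ᶠ x in atTop, -L < h x := hTop.eventually (eventually_gt_atTop (-L))
    have h2 : ∀ᶠ x : ℝ in atTop, (0:ℝ) < x := eventually_gt_atTop 0
    obtain ⟨x, hx1, hx2⟩ := (h1.and h2).exists
    exact ⟨x, hx2, by linarith⟩
  have hSbdd : BddBelow S := ⟨0, fun x hx => hx.1.le⟩
  -- right continuity gives a gap above ν
  obtain ⟨ε₀, hε₀, hball⟩ : ∃ ε > 0, ∀ t, dist t ν < ε → t ∈ Ici ν → h t < -L := by
    have hev : ∀ᶠ t in 𝓝[Ici ν] ν, h t < -L :=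
      (hRC ν hν).eventually (eventually_lt_nhds (by linarith : h ν < -L))
    have hmem : {t : ℝ | h t < -L} ∈ 𝓝[Ici ν] ν := hev
    rw [Metric.mem_nhdsWithin_iff] at hmem
    obtain ⟨ε, hε, hsub⟩ := hmem
    exact ⟨ε, hε, fun t h1 h2 => hsub ⟨Metric.mem_ball.mpr h1, h2⟩⟩
  have hSlb : ∀ x ∈ S, ν + ε₀ ≤ x := by
    intro x hx
    by_contra hcon
    push_neg at hcon
    rcases le_or_gt x ν with hle | hgt
    · have := hMono hx.1 hν hle
      linarith [hx.2, hνL]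
    · have hd : dist x ν < ε₀ := by
        rw [Real.dist_eq, abs_of_pos (by linarith : (0:ℝ) < x - ν)]
        linarith
      have := hball x hd (le_of_lt hgt)
      linarith [hx.2]
  have hννb : ν < νb := lt_of_lt_of_le (by linarith) (le_csInf hSne hSlb)
  have hno : ∀ t, 0 < t → t < νb → h t + L ≤ 0 := by
    intro t ht htb
    by_contra hcon
    push_neg at hcon
    exact absurd (csInf_le hSbdd ⟨ht, hcon⟩) (not_le.mpr htb)
  have hQpos_le : ∀ x, ν < x → x ≤ νb → 0 < Qfun m n ν L H x := by
    intro x hx1 hx2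
    refine Q_pos H hm hn hν hHL hx1 (fun t ht1 ht2 => ?_)
    rw [← hhH t ht1.le]
    exact hno t (hν.trans ht1) (lt_of_lt_of_le ht2 hx2)
  -- continuity at νb gives positivity slightly beyond
  have hqνb : 0 < qAux' σ m n ν L h νb := hq_of_Q νb hννb (hQpos_le νb hννb le_rfl)
  obtain ⟨ε, hε, hball2⟩ : ∃ ε > 0, ∀ y, dist y νb < ε → 0 < qAux' σ m n ν L h y := by
    have hev : ∀ᶠ y in 𝓝 νb, 0 < qAux' σ m n ν L h y :=
      (qAux'_continuousAt hσ hm hn hν H h hhH hννb).eventually (eventually_gt_nhds hqνb)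
    rw [Metric.eventually_nhds_iff] at hev
    exact hev
  have hQpos2 : ∀ x, ν < x → x < νb + ε → 0 < Qfun m n ν L H x := by
    intro x hx1 hx2
    rcases le_or_gt x νb with hle | hgt
    · exact hQpos_le x hx1 hle
    · refine hQ_of_q x hx1 (hball2 x ?_)
      rw [Real.dist_eq, abs_of_pos (by linarith : (0:ℝ) < x - νb)]
      linarith
  -- the crossing set
  set S' : Set ℝ := {x : ℝ | ν < x ∧ Qfun m n ν L H x ≤ 0} with hS'def
  have hS'lb : ∀ z ∈ S', νb + ε ≤ z := by
    intro z hz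
    by_contra hcon
    push_neg at hcon
    exact absurd (hQpos2 z hz.1 hcon) (not_lt.mpr hz.2)
  -- candidate
  by_cases hcase : S'.Nonempty
  · -- finite threshold
    have hS'bdd : BddBelow S' := ⟨ν, fun z hz => hz.1.le⟩
    set xh : ℝ := sInf S' with hxhdef
    have hxh_ge : νb + ε ≤ xh := le_csInf hcase hS'lb
    have hp1 : (νb : EReal) < ((xh : ℝ) : EReal) := by
      rw [EReal.coe_lt_coe_iff]; linarith
    have hp2 : ∀ x : ℝ, ν < x → (x : EReal) < ((xh : ℝ) : EReal) →
        0 < qAux' σ m n ν L h x := by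
      intro x hx1 hx2
      rw [EReal.coe_lt_coe_iff] at hx2
      have hxnot : x ∉ S' := fun hmem => absurd (csInf_le hS'bdd hmem) (not_le.mpr hx2)
      have : ¬ (ν < x ∧ Qfun m n ν L H x ≤ 0) := hxnot
      push_neg at this
      exact hq_of_Q x hx1 (this hx1)
    have hp3 : ∀ x : ℝ, ((xh : ℝ) : EReal) < (x : EReal) → qAux' σ m n ν L h x < 0 := by
      intro x hx
      rw [EReal.coe_lt_coe_iff] at hx
      obtain ⟨z, hzS, hzx⟩ := exists_lt_of_csInf_lt hcase hx
      refine hqneg_of_Q x (hzS.1.trans hzx) (Q_neg H hm hn hν hHL hzS.1 hzx hzS.2)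
    refine ⟨((xh : ℝ) : EReal), ⟨hp1, hp2, hp3⟩, ?_⟩
    intro y hy
    by_contra hne
    rcases lt_or_gt_of_ne hne with hlt | hgt
    · obtain ⟨w, hw1, hw2⟩ := EReal.exists_between_coe_real hlt
      have hνbw : νb < w := by
        have : (νb : EReal) < (w : EReal) := hy.1.trans hw1
        exact EReal.coe_lt_coe_iff.mp this
      have hq1 : 0 < qAux' σ m n ν L h w := hp2 w (hννb.trans hνbw) hw2
      have hq2 : qAux' σ m n ν L h w < 0 := hy.2.2 w hw1
      linarith
    · obtain ⟨w, hw1, hw2⟩ := EReal.exists_between_coe_real hgt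
      have hνbw : νb < w := by
        have : (νb : EReal) < (w : EReal) := hp1.trans hw1
        exact EReal.coe_lt_coe_iff.mp this
      have hq1 : 0 < qAux' σ m n ν L h w := hy.2.1 w (hννb.trans hνbw) hw2
      have hq2 : qAux' σ m n ν L h w < 0 := hp3 w hw1
      linarith
  · -- no crossing: threshold is ⊤
    have hallpos : ∀ x : ℝ, ν < x → 0 < qAux' σ m n ν L h x := by
      intro x hx
      refine hq_of_Q x hx ?_
      by_contra hcon
      push_neg at hcon
      exact hcase ⟨x, hx, hcon⟩
    refine ⟨(⊤ : EReal), ⟨EReal.coe_lt_top νb, fun x hx _ => hallpos x hx,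
      fun x hx => absurd hx (not_top_lt)⟩, ?_⟩
    intro y hy
    by_contra hne
    have hlt : y < ⊤ := lt_of_le_of_ne le_top hne
    obtain ⟨w, hw1, hw2⟩ := EReal.exists_between_coe_real hlt
    have hνbw : νb < w := by
      have : (νb : EReal) < (w : EReal) := hy.1.trans hw1
      exact EReal.coe_lt_coe_iff.mp this
    have hq1 : 0 < qAux' σ m n ν L h w := hallpos w (hννb.trans hνbw)
    have hq2 : qAux' σ m n ν L h w < 0 := hy.2.2 w hw1
    linarith
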